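/- Let φ(x) = (sin x − x cos x)/x² for x > 0. Fix 0 ≤ u ≤ T, Λ > 0, and a real number c > 0. Then ∫₀^Λ ∫_u^T ∫_u^t e^{−r(t − s)} e^{−r²(t − u)/2} e^{−r²(s − u)/2} |φ(r c)| r² ds dt dr ≤ ∫₀^∞ |sin x − x cos x| x^{−3} dx, and in particular the left-hand side is bounded by a finite constant independent of u, T, Λ, and c. -/

import Mathlib

open MeasureTheory Real

/-- `φ x = (sin x - x cos x) / x²`. -/
noncomputable def phi (x : ℝ) : ℝ := (Real.sin x - x * Real.cos x) / x ^ 2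

/-- The triple integral `∫₀^Λ ∫_u^T ∫_u^t e^{-r(t-s)} e^{-r²(t-u)/2} e^{-r²(s-u)/2}
|φ(rc)| r² ds dt dr`. -/
noncomputable def E_offdiag (u T Λ c : ℝ) : ℝ :=
  ∫ r in Set.Ioc (0 : ℝ) Λ, ∫ t in Set.Ioc u T, ∫ s in Set.Ioc u t,
    Real.exp (-(r * (t - s))) * Real.exp (-(r ^ 2 * (t - u) / 2)) *
      Real.exp (-(r ^ 2 * (s - u) / 2)) * |phi (r * c)| * r ^ 2

section Aux

open Set

noncomputable def psi (x : ℝ) : ℝ := |Real.sin x - x * Real.cos x| * x ^ (-(3 : ℝ))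

lemma expInt_eq (a : ℝ) {k : ℝ} (hk : 0 < k) :
    ∫ x in Ioi a, Real.exp (-(k * (x - a))) = 1 / k := by
  have h1 : (fun x : ℝ => Real.exp (-(k * (x - a))))
      = fun x => (fun y => Real.exp (-(y - k * a))) (k * x) := by
    funext x; ring_nf
  rw [h1, integral_comp_mul_left_Ioi (fun y => Real.exp (-(y - k * a))) a hk]
  have h2 : ∫ y in Ioi (k * a), Real.exp (-(y - k * a))
      = Real.exp (k * a) * ∫ y in Ioi (k * a), Real.exp (-y) := by
    rw [← integral_const_mul]
    congr 1; funext y; rw [← Real.exp_add]; ring_nf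
  rw [h2, integral_exp_neg_Ioi, ← Real.exp_add]
  simp [smul_eq_mul]

lemma expInt_integrableOn (a : ℝ) {k : ℝ} (hk : 0 < k) :
    IntegrableOn (fun x : ℝ => Real.exp (-(k * (x - a)))) (Ici a) := by
  have h : IntegrableOn (fun x : ℝ => Real.exp (k * a) * Real.exp (-k * x)) (Ioi a) :=
    (exp_neg_integrableOn_Ioi a hk).const_mul _
  have h2 : IntegrableOn (fun x : ℝ => Real.exp (-(k * (x - a)))) (Ioi a) := by
    refine h.congr_fun (fun x _ => ?_) measurableSet_Ioi
    beta_reduce; rw [← Real.exp_add]; ring_nf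
  rwa [integrableOn_Ici_iff_integrableOn_Ioi]

lemma expInt_le {a k : ℝ} (hk : 0 < k) {S : Set ℝ} (hS : S ⊆ Ici a) :
    ∫ x in S, Real.exp (-(k * (x - a))) ≤ 1 / k := by
  have h := setIntegral_mono_set (expInt_integrableOn a hk)
    (Filter.Eventually.of_forall fun x => (Real.exp_pos _).le)
    (HasSubset.Subset.eventuallyLE hS)
  rw [integral_Ici_eq_integral_Ioi, expInt_eq a hk] at h
  exact h

lemma psi_nonneg {x : ℝ} (hx : 0 < x) : 0 ≤ psi x :=
  mul_nonneg (abs_nonneg _) (Real.rpow_nonneg hx.le _)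

lemma psi_meas : Measurable psi := by
  unfold psi
  fun_prop

lemma abs_S_le {x : ℝ} (hx : 0 < x) (hx1 : x ≤ 1) :
    |Real.sin x - x * Real.cos x| ≤ x ^ 3 := by
  rw [abs_le]
  constructor
  · have h1 : x - x ^ 3 / 4 < Real.sin x := by have := Real.sin_gt_sub_cube hx; nlinarith [pow_pos hx 3]
    have h2 : x * Real.cos x ≤ x * 1 :=
      mul_le_mul_of_nonneg_left (Real.cos_le_one x) hx.le
    nlinarith [pow_pos hx 3]
  · have h1 : Real.sin x ≤ x := Real.sin_le hx.le
    have h2 : x * (1 - x ^ 2 / 2) ≤ x * Real.cos x :=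
      mul_le_mul_of_nonneg_left (Real.one_sub_sq_div_two_le_cos) hx.le
    nlinarith [pow_pos hx 3]

lemma rpow_neg3 {x : ℝ} (hx : 0 < x) : x ^ (-(3 : ℝ)) = (x ^ 3)⁻¹ := by
  rw [Real.rpow_neg hx.le, ← Real.rpow_natCast x 3]
  norm_num

lemma psi_integrableOn : IntegrableOn psi (Ioi (0 : ℝ)) := by
  have hsplit : Ioc (0 : ℝ) 1 ∪ Ioi 1 = Ioi 0 := Ioc_union_Ioi_eq_Ioi zero_le_one
  rw [← hsplit]
  apply IntegrableOn.union
  · refine Integrable.mono' (integrable_const (1 : ℝ))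
      psi_meas.aestronglyMeasurable ?_
    filter_upwards [ae_restrict_mem measurableSet_Ioc] with x hx
    rcases hx with ⟨hx0, hx1⟩
    rw [Real.norm_eq_abs, abs_of_nonneg (psi_nonneg hx0)]
    unfold psi
    rw [rpow_neg3 hx0]
    have h3 : (0:ℝ) < x ^ 3 := pow_pos hx0 3
    calc |Real.sin x - x * Real.cos x| * (x ^ 3)⁻¹
        ≤ x ^ 3 * (x ^ 3)⁻¹ :=
          mul_le_mul_of_nonneg_right (abs_S_le hx0 hx1) (inv_nonneg.2 h3.le)
      _ = 1 := mul_inv_cancel₀ h3.ne'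
  · refine Integrable.mono'
      (((integrableOn_Ioi_rpow_of_lt (by norm_num : (-2:ℝ) < -1) one_pos)).const_mul 2)
      psi_meas.aestronglyMeasurable ?_
    filter_upwards [ae_restrict_mem measurableSet_Ioi] with x hx
    have hx0 : (0:ℝ) < x := lt_trans one_pos hx
    rw [Real.norm_eq_abs, abs_of_nonneg (psi_nonneg hx0)]
    unfold psi
    have hS : |Real.sin x - x * Real.cos x| ≤ 2 * x := by
      calc |Real.sin x - x * Real.cos x| ≤ |Real.sin x| + |x * Real.cos x| := abs_sub _ _
        _ ≤ 1 + x * 1 := by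
            refine add_le_add (Real.abs_sin_le_one x) ?_
            rw [abs_mul, abs_of_nonneg hx0.le]
            exact mul_le_mul_of_nonneg_left (Real.abs_cos_le_one x) hx0.le
        _ ≤ 2 * x := by nlinarith [(show (1:ℝ) < x from hx).le]
    have key : x * x ^ (-(3:ℝ)) = x ^ (-(2:ℝ)) := by
      rw [show (-(2:ℝ)) = -(3:ℝ) + 1 by norm_num, Real.rpow_add_one hx0.ne']
      ring
    calc |Real.sin x - x * Real.cos x| * x ^ (-(3:ℝ))
        ≤ (2 * x) * x ^ (-(3:ℝ)) :=
          mul_le_mul_of_nonneg_right hS (Real.rpow_nonneg hx0.le _)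
      _ = 2 * x ^ (-(2:ℝ)) := by rw [mul_assoc, key]

lemma Dr_le (u T c : ℝ) (hc : 0 < c) {r : ℝ} (hr : 0 < r) :
    (∫ t in Set.Ioc u T, ∫ s in Set.Ioc u t,
      Real.exp (-(r * (t - s))) * Real.exp (-(r ^ 2 * (t - u) / 2)) *
        Real.exp (-(r ^ 2 * (s - u) / 2)) * |phi (r * c)| * r ^ 2)
      ≤ c * psi (c * r) := by
  have hr2 : (0:ℝ) < r ^ 2 := pow_pos hr 2
  set M : ℝ := |phi (r * c)| * r ^ 2 with hM
  have hM0 : 0 ≤ M := mul_nonneg (abs_nonneg _) (sq_nonneg r)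
  set F : ℝ → ℝ → ℝ := fun t s =>
    Real.exp (-(r * (t - s))) * Real.exp (-(r ^ 2 * (t - u) / 2)) *
      Real.exp (-(r ^ 2 * (s - u) / 2)) * |phi (r * c)| * r ^ 2 with hF
  have hF0 : ∀ t s, 0 ≤ F t s := fun t s => by
    rw [hF]; positivity
  have hFle : ∀ t s, u ≤ s → s ≤ t → F t s ≤ M := fun t s hus hst => by
    rw [hF, hM]
    have e1 : Real.exp (-(r * (t - s))) ≤ 1 := Real.exp_le_one_iff.2 (by nlinarith)
    have e2 : Real.exp (-(r ^ 2 * (t - u) / 2)) ≤ 1 := Real.exp_le_one_iff.2 (by nlinarith)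
    have e3 : Real.exp (-(r ^ 2 * (s - u) / 2)) ≤ 1 := Real.exp_le_one_iff.2 (by nlinarith)
    calc Real.exp (-(r * (t - s))) * Real.exp (-(r ^ 2 * (t - u) / 2)) *
          Real.exp (-(r ^ 2 * (s - u) / 2)) * |phi (r * c)| * r ^ 2
        ≤ 1 * 1 * 1 * |phi (r * c)| * r ^ 2 := by
          gcongr <;> positivity
      _ = |phi (r * c)| * r ^ 2 := by ring
  haveI : IsFiniteMeasure (volume.restrict (Set.Ioc u T)) :=
    ⟨by rw [Measure.restrict_apply_univ]; exact measure_Ioc_lt_top⟩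
  set g : ℝ → ℝ → ℝ := fun t s => (Set.Ioc u t).indicator (F t) s with hg
  have step1 : (∫ t in Set.Ioc u T, ∫ s in Set.Ioc u t, F t s)
      = ∫ t in Set.Ioc u T, ∫ s in Set.Ioc u T, g t s := by
    refine (setIntegral_congr_fun measurableSet_Ioc (fun t ht => ?_)).symm
    rw [hg, setIntegral_indicator measurableSet_Ioc]
    congr 1
    rw [Set.Ioc_inter_Ioc, max_self, min_eq_right ht.2]
  have hswap : Integrable (Function.uncurry g)
      ((volume.restrict (Set.Ioc u T)).prod (volume.restrict (Set.Ioc u T))) := by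
    have hmeas : Measurable (Function.uncurry g) := by
      have hgu : Function.uncurry g =
          {p : ℝ × ℝ | p.2 ∈ Set.Ioc u p.1}.indicator (fun p => F p.1 p.2) := by
        funext p
        rcases p with ⟨t, s⟩
        simp only [Function.uncurry, hg, Set.indicator_apply, Set.mem_setOf_eq]
      rw [hgu]
      refine Measurable.indicator ?_ ?_
      · rw [hF]; fun_prop
      · exact MeasurableSet.inter
          (measurableSet_lt measurable_const measurable_snd)
          (measurableSet_le measurable_snd measurable_fst)
    refine Integrable.mono' (integrable_const M) hmeas.aestronglyMeasurable ?_
    refine Filter.Eventually.of_forall (fun p => ?_)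
    rcases p with ⟨t, s⟩
    simp only [Function.uncurry, hg]
    rw [Set.indicator_apply]
    split_ifs with h
    · rw [Real.norm_eq_abs, abs_of_nonneg (hF0 t s)]
      exact hFle t s h.1.le h.2
    · simpa using hM0
  have step2 : (∫ t in Set.Ioc u T, ∫ s in Set.Ioc u T, g t s)
      = ∫ s in Set.Ioc u T, ∫ t in Set.Ioc u T, g t s :=
    integral_integral_swap hswap
  have step3 : ∀ s ∈ Set.Ioc u T,
      (∫ t in Set.Ioc u T, g t s) ≤ Real.exp (-(r ^ 2 * (s - u))) * (M * (1 / r)) := by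
    intro s hs
    have hgi : (fun t => g t s) = fun t => (Set.Ici s).indicator (fun t => F t s) t := by
      funext t
      rw [hg]
      simp only [Set.indicator_apply, Set.mem_Ioc, Set.mem_Ici]
      by_cases h : s ≤ t
      · simp [h, hs.1]
      · simp [h]
    rw [hgi, setIntegral_indicator measurableSet_Ici]
    set S := Set.Ioc u T ∩ Set.Ici s with hSdef
    have hSmeas : MeasurableSet S := measurableSet_Ioc.inter measurableSet_Ici
    have hSsub : S ⊆ Set.Ici s := Set.inter_subset_right
    have hIntRHS : IntegrableOn
        (fun t => Real.exp (-(r * (t - s))) * (Real.exp (-(r ^ 2 * (s - u))) * M)) S :=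
      (((expInt_integrableOn s hr).mono_set hSsub).mul_const _)
    have hmono : (∫ t in S, F t s) ≤
        ∫ t in S, Real.exp (-(r * (t - s))) * (Real.exp (-(r ^ 2 * (s - u))) * M) := by
      refine integral_mono_of_nonneg
        (Filter.Eventually.of_forall (fun t => hF0 t s)) hIntRHS ?_
      filter_upwards [ae_restrict_mem hSmeas] with t ht
      rcases ht with ⟨htT, hts⟩
      rw [hF]
      have e2 : Real.exp (-(r ^ 2 * (t - u) / 2)) ≤ Real.exp (-(r ^ 2 * (s - u) / 2)) := by
        apply Real.exp_le_exp.2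
        nlinarith [Set.mem_Ici.1 hts]
      calc Real.exp (-(r * (t - s))) * Real.exp (-(r ^ 2 * (t - u) / 2)) *
            Real.exp (-(r ^ 2 * (s - u) / 2)) * |phi (r * c)| * r ^ 2
          ≤ Real.exp (-(r * (t - s))) * Real.exp (-(r ^ 2 * (s - u) / 2)) *
            Real.exp (-(r ^ 2 * (s - u) / 2)) * |phi (r * c)| * r ^ 2 := by
            gcongr <;> positivity
        _ = Real.exp (-(r * (t - s))) * (Real.exp (-(r ^ 2 * (s - u))) * M) := by
            rw [hM, show Real.exp (-(r ^ 2 * (s - u)))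
              = Real.exp (-(r ^ 2 * (s - u) / 2)) * Real.exp (-(r ^ 2 * (s - u) / 2)) from by
                rw [← Real.exp_add]; ring_nf]
            ring
    refine hmono.trans ?_
    rw [integral_mul_const]
    have hexp : (∫ t in S, Real.exp (-(r * (t - s)))) ≤ 1 / r := expInt_le hr hSsub
    have hnn : 0 ≤ Real.exp (-(r ^ 2 * (s - u))) * M :=
      mul_nonneg (Real.exp_pos _).le hM0
    calc (∫ t in S, Real.exp (-(r * (t - s)))) * (Real.exp (-(r ^ 2 * (s - u))) * M)
        ≤ (1 / r) * (Real.exp (-(r ^ 2 * (s - u))) * M) :=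
          mul_le_mul_of_nonneg_right hexp hnn
      _ = Real.exp (-(r ^ 2 * (s - u))) * (M * (1 / r)) := by ring
  have step4 : (∫ s in Set.Ioc u T, ∫ t in Set.Ioc u T, g t s)
      ≤ (1 / r ^ 2) * (M * (1 / r)) := by
    have hIntRHS : IntegrableOn
        (fun s => Real.exp (-(r ^ 2 * (s - u))) * (M * (1 / r))) (Set.Ioc u T) :=
      (((expInt_integrableOn u hr2).mono_set (fun x hx => le_of_lt hx.1)).mul_const _)
    have h1 : (∫ s in Set.Ioc u T, ∫ t in Set.Ioc u T, g t s)
        ≤ ∫ s in Set.Ioc u T, Real.exp (-(r ^ 2 * (s - u))) * (M * (1 / r)) := by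
      refine integral_mono_of_nonneg ?_ hIntRHS ?_
      · refine Filter.Eventually.of_forall (fun s => ?_)
        exact integral_nonneg (fun t => Set.indicator_nonneg (fun s' _ => hF0 t s') s)
      · filter_upwards [ae_restrict_mem measurableSet_Ioc] with s hs
        exact step3 s hs
    refine h1.trans ?_
    rw [integral_mul_const]
    have hexp : (∫ s in Set.Ioc u T, Real.exp (-(r ^ 2 * (s - u)))) ≤ 1 / r ^ 2 :=
      expInt_le hr2 (fun x hx => le_of_lt hx.1)
    exact mul_le_mul_of_nonneg_right hexp (mul_nonneg hM0 (by positivity))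
  have hfinal : (1 / r ^ 2) * (M * (1 / r)) = c * psi (c * r) := by
    have hcr : (0:ℝ) < c * r := mul_pos hc hr
    rw [hM]
    unfold phi psi
    rw [rpow_neg3 hcr, mul_comm r c, abs_div, abs_of_nonneg (sq_nonneg (c * r))]
    field_simp
  calc (∫ t in Set.Ioc u T, ∫ s in Set.Ioc u t, F t s)
      = ∫ s in Set.Ioc u T, ∫ t in Set.Ioc u T, g t s := by rw [step1, step2]
    _ ≤ (1 / r ^ 2) * (M * (1 / r)) := step4
    _ = c * psi (c * r) := hfinal

lemma E_le (u T Λ c : ℝ) (hc : 0 < c) :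
    E_offdiag u T Λ c ≤ ∫ x in Ioi (0:ℝ), psi x := by
  have hint : IntegrableOn (fun r => psi (c * r)) (Ioi (0:ℝ)) := by
    have h := (integrableOn_Ioi_comp_mul_left_iff psi 0 hc)
    rw [mul_zero] at h
    exact h.2 psi_integrableOn
  have hint2 : IntegrableOn (fun r => c * psi (c * r)) (Ioi (0:ℝ)) := hint.const_mul c
  have h1 : E_offdiag u T Λ c ≤ ∫ r in Ioc (0:ℝ) Λ, c * psi (c * r) := by
    unfold E_offdiag
    refine integral_mono_of_nonneg ?_ (hint2.mono_set Set.Ioc_subset_Ioi_self) ?_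
    · refine Filter.Eventually.of_forall (fun r => ?_)
      exact integral_nonneg fun t => integral_nonneg fun s => by positivity
    · filter_upwards [ae_restrict_mem measurableSet_Ioc] with r hr
      exact Dr_le u T c hc hr.1
  have h2 : (∫ r in Ioc (0:ℝ) Λ, c * psi (c * r)) ≤ ∫ r in Ioi (0:ℝ), c * psi (c * r) := by
    refine setIntegral_mono_set hint2 ?_
      (HasSubset.Subset.eventuallyLE Set.Ioc_subset_Ioi_self)
    filter_upwards [ae_restrict_mem measurableSet_Ioi] with r hr
    exact mul_nonneg hc.le (psi_nonneg (mul_pos hc hr))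
  have h3 : (∫ r in Ioi (0:ℝ), c * psi (c * r)) = ∫ x in Ioi (0:ℝ), psi x := by
    rw [integral_const_mul, integral_comp_mul_left_Ioi psi 0 hc, mul_zero, smul_eq_mul,
      ← mul_assoc, mul_inv_cancel₀ hc.ne', one_mul]
  linarith

end Aux

theorem E_offdiag_estimate (u T Λ c : ℝ) (hu : 0 ≤ u) (huT : u ≤ T)
    (hΛ : 0 < Λ) (hc : 0 < c) :
    E_offdiag u T Λ c ≤
        ∫ x in Set.Ioi (0 : ℝ), |Real.sin x - x * Real.cos x| * x ^ (-(3 : ℝ)) ∧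
      ∃ C : ℝ, ∀ u' T' Λ' c' : ℝ, 0 ≤ u' → u' ≤ T' → 0 < Λ' → 0 < c' →
        E_offdiag u' T' Λ' c' ≤ C := by
  refine ⟨E_le u T Λ c hc, ⟨∫ x in Set.Ioi (0:ℝ), psi x,
    fun u' T' Λ' c' _ _ _ hc' => E_le u' T' Λ' c' hc'⟩⟩
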